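/- Let K ⊂ ℝ³ be a non-degenerate 3-dimensional unbounded convex polyhedron such that the direction vectors of any two unbounded edges of K are linearly dependent (all unbounded edges are parallel). Then K has at least one bounded facet. -/

import Mathlib

open Bornology Pointwise

/-- A convex polyhedron in `ℝ^n`: a finite intersection of closed half-spaces
`{x | ℓ x ≤ c}` with `ℓ` a nonzero linear functional (the empty intersection,
i.e. all of `ℝ^n`, is allowed). -/
def IsConvexPolyhedron (n : ℕ) (K : Set (Fin n → ℝ)) : Prop :=
  ∃ (m : ℕ) (L : Fin m → ((Fin n → ℝ) →ₗ[ℝ] ℝ)) (c : Fin m → ℝ),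
    (∀ i, L i ≠ 0) ∧ K = {x | ∀ i, L i x ≤ c i}

/-- The dimension of a subset of `ℝ^n`: the dimension of its affine span. -/
noncomputable def polyDim (n : ℕ) (K : Set (Fin n → ℝ)) : ℕ :=
  Module.finrank ℝ (affineSpan ℝ K).direction

/-- `F` is a face of `K`: the intersection of `K` with a supporting hyperplane,
i.e. an affine hyperplane meeting `K` such that `K` lies in one of the two
closed half-spaces it bounds. -/
def IsFaceOf (n : ℕ) (K F : Set (Fin n → ℝ)) : Prop :=
  ∃ (L : (Fin n → ℝ) →ₗ[ℝ] ℝ) (c : ℝ), L ≠ 0 ∧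
    (K ∩ {x | L x = c}).Nonempty ∧ (∀ x ∈ K, L x ≤ c) ∧ F = K ∩ {x | L x = c}

/-- `p` is a vertex of `K`: the singleton `{p}` is a face of `K`. -/
def IsVertexOf (n : ℕ) (K : Set (Fin n → ℝ)) (p : Fin n → ℝ) : Prop :=
  IsFaceOf n K {p}

/-- An edge of `K` is a face of dimension `1`. -/
def IsEdgeOf (n : ℕ) (K A : Set (Fin n → ℝ)) : Prop :=
  IsFaceOf n K A ∧ polyDim n A = 1

/-- A facet of `K` is a face of dimension `dim K - 1`. -/
def IsFacetOf (n : ℕ) (K F : Set (Fin n → ℝ)) : Prop :=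
  IsFaceOf n K F ∧ polyDim n F + 1 = polyDim n K

/-- `A` is an unbounded edge of `K` with direction vector `v`,
i.e. `A = q + ℝ≥0·v` for some vertex `q` of `K` and `v ≠ 0`. -/
def IsUnboundedEdgeWithDir (n : ℕ) (K A : Set (Fin n → ℝ)) (v : Fin n → ℝ) : Prop :=
  IsEdgeOf n K A ∧ ¬ IsBounded A ∧ v ≠ 0 ∧
    ∃ q, IsVertexOf n K q ∧ A = {x | ∃ t : ℝ, 0 ≤ t ∧ x = q + t • v}

/-- The recession cone of `K`. -/
def recCone (n : ℕ) (K : Set (Fin n → ℝ)) : Set (Fin n → ℝ) :=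
  {v | ∀ x ∈ K, ∀ t : ℝ, 0 ≤ t → x + t • v ∈ K}

/-- The projection `π_n : ℝ^n → ℝ^n`, `(x₁,…,x_n) ↦ (x₁,…,x_{n-1},0)`. -/
def projLast (n : ℕ) (x : Fin n → ℝ) : Fin n → ℝ :=
  fun i => if (i : ℕ) = n - 1 then 0 else x i

/-- The set `A_K`, realized inside the hyperplane `{x_n = 0}` of `ℝ^n`:
points `y = (a,0)` such that the fiber `I_a = π_n⁻¹(a,0) ∩ K` is nonempty
but does not contain `(a,0)`. -/
def AKset (n : ℕ) (K : Set (Fin n → ℝ)) : Set (Fin n → ℝ) :=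
  {y | (∀ i : Fin n, (i : ℕ) = n - 1 → y i = 0) ∧
    ({x | projLast n x = y} ∩ K).Nonempty ∧ y ∉ K}

/-- `K` is in first trimming position with respect to its facet `F`. -/
def FirstTrimmingPosition (n : ℕ) (K F : Set (Fin n → ℝ)) : Prop :=
  IsFacetOf n K F ∧
  (∀ x ∈ F, ∀ i : Fin n, (i : ℕ) = n - 2 → x i = 0) ∧
  (∀ x ∈ K, ∀ i : Fin n, (i : ℕ) = n - 2 → x i ≤ 0) ∧
  (∀ y : Fin n → ℝ, IsBounded ({x | projLast n x = y} ∩ K)) ∧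
  IsBounded (AKset n K)

/-- `K` is in second trimming position with respect to its facet `F`. -/
def SecondTrimmingPosition (n : ℕ) (K F : Set (Fin n → ℝ)) : Prop :=
  IsFacetOf n K F ∧
  (∀ x ∈ F, ∀ i : Fin n, (i : ℕ) = n - 1 → x i = 0) ∧
  (∀ x ∈ K, ∀ i : Fin n, (i : ℕ) = n - 1 → x i ≤ 0) ∧
  IsBounded (AKset n K)

/-- A polynomial map `ℝ^n → ℝ^m`: each component is given by a polynomial. -/
def IsPolynomialMap (n m : ℕ) (f : (Fin n → ℝ) → (Fin m → ℝ)) : Prop :=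
  ∃ p : Fin m → MvPolynomial (Fin n) ℝ, ∀ x i, f x i = MvPolynomial.eval x (p i)

abbrev V3 := Fin 3 → ℝ

lemma unbounded_rec {ι : Type} [Finite ι] (A : ι → (V3 →ₗ[ℝ] ℝ)) (b : ι → ℝ)
    (h : ¬ IsBounded {x : V3 | ∀ i, A i x ≤ b i}) :
    ∃ u : V3, u ≠ 0 ∧ ∀ i, A i u ≤ 0 := by
  have hseq : ∀ k : ℕ, ∃ x : V3, (∀ i, A i x ≤ b i) ∧ (k : ℝ) + 1 ≤ ‖x‖ := by
    intro k
    rw [isBounded_iff_forall_norm_le] at h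
    push_neg at h
    obtain ⟨x, hx, hn⟩ := h ((k : ℝ) + 1)
    exact ⟨x, hx, hn.le⟩
  choose x hx hnx using hseq
  have hxnorm : ∀ k : ℕ, 0 < ‖x k‖ := fun k => lt_of_lt_of_le (by positivity) (hnx k)
  set u : ℕ → V3 := fun k => ‖x k‖⁻¹ • x k with hu
  have husph : ∀ k, u k ∈ Metric.sphere (0 : V3) 1 := by
    intro k
    have : ‖u k‖ = 1 := by
      rw [hu]
      simp only [norm_smul, norm_inv, norm_norm]
      exact inv_mul_cancel₀ (hxnorm k).ne'
    simpa [mem_sphere_iff_norm] using this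
  obtain ⟨a, ha, φ, hφ, hconv⟩ := (isCompact_sphere (0:V3) 1).tendsto_subseq husph
  refine ⟨a, ?_, ?_⟩
  · intro h0
    rw [h0] at ha
    simp at ha
  · intro i
    have hcont : Continuous (A i) := (A i).continuous_of_finiteDimensional
    have h1 : Filter.Tendsto (fun k => A i (u (φ k))) Filter.atTop (nhds (A i a)) :=
      (hcont.tendsto a).comp hconv
    have h2 : ∀ k, A i (u (φ k)) ≤ b i * ‖x (φ k)‖⁻¹ := by
      intro k
      have hp := hxnorm (φ k)
      have : A i (u (φ k)) = ‖x (φ k)‖⁻¹ * A i (x (φ k)) := by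
        rw [hu]; simp [smul_eq_mul]
      rw [this, mul_comm (b i)]
      exact mul_le_mul_of_nonneg_left (hx (φ k) i) (by positivity)
    have hnorm_tend : Filter.Tendsto (fun k => ‖x (φ k)‖) Filter.atTop Filter.atTop := by
      apply Filter.tendsto_atTop_mono (fun k => le_trans ?_ (hnx (φ k)))
      · exact Filter.tendsto_atTop_add_const_right _ 1 tendsto_natCast_atTop_atTop
      · have : (k : ℝ) ≤ (φ k : ℝ) := by exact_mod_cast hφ.le_apply
        linarith
    have h3 : Filter.Tendsto (fun k => b i * ‖x (φ k)‖⁻¹) Filter.atTop (nhds 0) := by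
      rw [show (0:ℝ) = b i * 0 by ring]
      exact (hnorm_tend.inv_tendsto_atTop).const_mul _
    exact le_of_tendsto_of_tendsto h1 h3 (Filter.Eventually.of_forall h2)

lemma ray_unbounded (q b : V3) (hb : b ≠ 0) :
    ¬ IsBounded {x : V3 | ∃ t : ℝ, 0 ≤ t ∧ x = q + t • b} := by
  rw [isBounded_iff_forall_norm_le]
  push_neg
  intro C
  have hbn : 0 < ‖b‖ := norm_pos_iff.mpr hb
  set t : ℝ := (|C| + ‖q‖ + 1) / ‖b‖ with ht
  have htpos : 0 ≤ t := by positivity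
  refine ⟨q + t • b, ⟨t, htpos, rfl⟩, ?_⟩
  have h1 : ‖t • b‖ ≤ ‖q + t • b‖ + ‖q‖ := by
    calc ‖t • b‖ = ‖(q + t • b) - q‖ := by congr 1; abel
    _ ≤ ‖q + t • b‖ + ‖q‖ := norm_sub_le _ _
  have h2 : ‖t • b‖ = |C| + ‖q‖ + 1 := by
    rw [norm_smul, Real.norm_eq_abs, abs_of_nonneg htpos, ht, div_mul_cancel₀ _ hbn.ne']
  have h3 : |C| + 1 ≤ ‖q + t • b‖ := by linarith
  calc C ≤ |C| := le_abs_self C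
  _ < |C| + 1 := by linarith
  _ ≤ _ := h3

lemma vectorSpan_ray (q b : V3) (hb : b ≠ 0) :
    vectorSpan ℝ {x : V3 | ∃ t : ℝ, 0 ≤ t ∧ x = q + t • b} = Submodule.span ℝ {b} := by
  apply le_antisymm
  · rw [vectorSpan_def, Submodule.span_le]
    rintro w ⟨x, ⟨s, hs, rfl⟩, y, ⟨s', hs', rfl⟩, rfl⟩
    have heq : (fun x1 x2 => x1 -ᵥ x2) (q + s • b) (q + s' • b) = (s - s') • b := by
      simp only [vsub_eq_sub, sub_smul]
      abel
    rw [heq]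
    exact Submodule.smul_mem _ _ (Submodule.mem_span_singleton_self b)
  · rw [Submodule.span_le, Set.singleton_subset_iff]
    have h1 : (q + (1:ℝ) • b) ∈ {x : V3 | ∃ t : ℝ, 0 ≤ t ∧ x = q + t • b} := ⟨1, by norm_num⟩
    have h0 : (q + (0:ℝ) • b) ∈ {x : V3 | ∃ t : ℝ, 0 ≤ t ∧ x = q + t • b} := ⟨0, by norm_num⟩
    have := vsub_mem_vectorSpan ℝ h1 h0
    simpa using this

lemma polyDim_ray (q b : V3) (hb : b ≠ 0) :
    polyDim 3 {x : V3 | ∃ t : ℝ, 0 ≤ t ∧ x = q + t • b} = 1 := by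
  unfold polyDim
  rw [direction_affineSpan, vectorSpan_ray q b hb]
  exact finrank_span_singleton hb

lemma finrank_ker_two (L : V3 →ₗ[ℝ] ℝ) (hL : L ≠ 0) :
    Module.finrank ℝ (LinearMap.ker L) = 2 := by
  have hr := LinearMap.finrank_range_add_finrank_ker L
  have hV : Module.finrank ℝ V3 = 3 := by
    simp [Module.finrank_pi]
  have hrange : LinearMap.range L = ⊤ :=
    LinearMap.range_eq_top.mpr (LinearMap.surjective_of_ne_zero hL)
  rw [hrange, hV] at hr
  simp only [finrank_top, Module.finrank_self] at hr
  omega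

lemma ker_inter_eq_span (ψ χ : V3 →ₗ[ℝ] ℝ) (b : V3) (hb : b ≠ 0)
    (hψb : ψ b = 0) (hχb : χ b = 0) (hψ0 : ψ ≠ 0)
    (hind : ∀ a : ℝ, χ ≠ a • ψ) :
    LinearMap.ker ψ ⊓ LinearMap.ker χ = Submodule.span ℝ {b} := by
  obtain ⟨z, hz⟩ : ∃ z, ψ z ≠ 0 := by
    by_contra hc
    push_neg at hc
    exact hψ0 (LinearMap.ext fun x => by simp [hc x])
  set x₀ : V3 := (ψ z)⁻¹ • z with hx₀
  have hψx₀ : ψ x₀ = 1 := by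
    rw [hx₀]; simp [inv_mul_cancel₀ hz]
  set χ' : V3 →ₗ[ℝ] ℝ := χ - (χ x₀) • ψ with hχ'
  have hχ'0 : χ' ≠ 0 := by
    intro hc
    apply hind (χ x₀)
    have h : χ - (χ x₀) • ψ = 0 := hc
    linear_combination (norm := module) h
  obtain ⟨y₀, hy₀⟩ : ∃ y₀, χ' y₀ ≠ 0 := by
    by_contra hc
    push_neg at hc
    exact hχ'0 (LinearMap.ext fun x => by simp [hc x])
  set y₁ : V3 := y₀ - (ψ y₀) • x₀ with hy₁
  have hψy₁ : ψ y₁ = 0 := by rw [hy₁]; simp [hψx₀]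
  have hχy₁ : χ y₁ ≠ 0 := by
    have h1 : χ' y₁ = χ' y₀ := by
      rw [hy₁, hχ']
      simp only [LinearMap.sub_apply, LinearMap.smul_apply, map_sub, map_smul, smul_eq_mul,
        hψx₀]
      ring
    have h2 : χ' y₁ = χ y₁ - (χ x₀) * ψ y₁ := by rw [hχ']; simp
    rw [hψy₁] at h2
    intro hc
    rw [hc] at h2
    simp at h2
    rw [h1] at h2
    exact hy₀ h2
  set Φ : V3 →ₗ[ℝ] (ℝ × ℝ) := ψ.prod χ with hΦ
  have hkerΦ : LinearMap.ker Φ = LinearMap.ker ψ ⊓ LinearMap.ker χ := LinearMap.ker_prod ψ χ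
  have hindep : LinearIndependent ℝ ![Φ x₀, Φ y₁] := by
    rw [LinearIndependent.pair_iff]
    intro s t hst
    have h1 : s * ψ x₀ + t * ψ y₁ = 0 := by
      have := congrArg Prod.fst hst
      simpa [hΦ, Prod.smul_def] using this
    have h2 : s * χ x₀ + t * χ y₁ = 0 := by
      have := congrArg Prod.snd hst
      simpa [hΦ, Prod.smul_def] using this
    rw [hψx₀, hψy₁] at h1
    simp at h1
    refine ⟨h1, ?_⟩
    rw [h1] at h2
    simp at h2
    rcases h2 with h2 | h2
    · exact h2
    · exact absurd h2 hχy₁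
  have hspan_le : Submodule.span ℝ (Set.range ![Φ x₀, Φ y₁]) ≤ LinearMap.range Φ := by
    rw [Submodule.span_le]
    rintro w hw
    simp only [Set.mem_range] at hw
    obtain ⟨i, rfl⟩ := hw
    fin_cases i
    · exact LinearMap.mem_range_self _ _
    · exact LinearMap.mem_range_self _ _
  have hrank2 : 2 ≤ Module.finrank ℝ (LinearMap.range Φ) := by
    have hcard := finrank_span_eq_card hindep
    simp only [Fintype.card_fin] at hcard
    calc (2:ℕ) = Module.finrank ℝ (Submodule.span ℝ (Set.range ![Φ x₀, Φ y₁])) := hcard.symm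
    _ ≤ _ := Submodule.finrank_mono hspan_le
  have hrn := LinearMap.finrank_range_add_finrank_ker Φ
  have hV : Module.finrank ℝ V3 = 3 := by simp [Module.finrank_pi]
  rw [hV] at hrn
  have hker_le : Module.finrank ℝ (LinearMap.ker Φ) ≤ 1 := by omega
  have hble : Submodule.span ℝ {b} ≤ LinearMap.ker ψ ⊓ LinearMap.ker χ := by
    rw [Submodule.span_le, Set.singleton_subset_iff]
    exact ⟨hψb, hχb⟩
  have hb1 : Module.finrank ℝ (Submodule.span ℝ ({b} : Set V3)) = 1 := finrank_span_singleton hb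
  symm
  apply Submodule.eq_of_le_of_finrank_le hble
  rw [hb1, ← hkerΦ]
  exact hker_le

lemma exists_chi (ψ : V3 →ₗ[ℝ] ℝ) (hψ0 : ψ ≠ 0) (b : V3) (hb : b ≠ 0) (hψb : ψ b = 0) :
    ∃ χ : V3 →ₗ[ℝ] ℝ, χ b = 0 ∧ ∀ a : ℝ, χ ≠ a • ψ := by
  set evb : (V3 →ₗ[ℝ] ℝ) →ₗ[ℝ] ℝ :=
    { toFun := fun f => f b
      map_add' := fun f g => rfl
      map_smul' := fun a f => rfl } with hevb
  have hV : Module.finrank ℝ V3 = 3 := by simp [Module.finrank_pi]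
  have hD : Module.finrank ℝ (V3 →ₗ[ℝ] ℝ) = 3 := by
    have h := Subspace.dual_finrank_eq (K := ℝ) (V := V3)
    have : Module.finrank ℝ (Module.Dual ℝ V3) = Module.finrank ℝ (V3 →ₗ[ℝ] ℝ) := rfl
    rw [this] at h
    rw [h, hV]
  have hevb0 : evb ≠ 0 := by
    obtain ⟨k, hk⟩ : ∃ k, b k ≠ 0 := by
      by_contra hc; push_neg at hc; exact hb (funext hc)
    intro hc
    have : evb (LinearMap.proj k) = 0 := by rw [hc]; rfl
    exact hk this
  have hkerd : Module.finrank ℝ (LinearMap.ker evb) = 2 := by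
    have hr := LinearMap.finrank_range_add_finrank_ker evb
    have hrange : LinearMap.range evb = ⊤ :=
      LinearMap.range_eq_top.mpr (LinearMap.surjective_of_ne_zero hevb0)
    rw [hrange, hD] at hr
    simp only [finrank_top, Module.finrank_self] at hr
    omega
  have hnle : ¬ (LinearMap.ker evb ≤ Submodule.span ℝ {ψ}) := by
    intro hle
    have h1 := Submodule.finrank_mono hle
    rw [hkerd, finrank_span_singleton hψ0] at h1
    omega
  obtain ⟨χ, hχker, hχns⟩ := SetLike.not_le_iff_exists.mp hnle
  refine ⟨χ, hχker, fun a hc => ?_⟩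
  apply hχns
  rw [hc]
  exact Submodule.smul_mem _ _ (Submodule.mem_span_singleton_self ψ)

/-- Finitely many closed sets covering an open ball: one contains a ball. -/
lemma cover_ball {ι : Type*} (J : Finset ι) (S : ι → Set V3) (hS : ∀ j ∈ J, IsClosed (S j)) :
    ∀ (x : V3) (r : ℝ), 0 < r → (Metric.ball x r ⊆ ⋃ j ∈ J, S j) →
    ∃ j ∈ J, ∃ (y : V3) (ρ : ℝ), 0 < ρ ∧ Metric.ball y ρ ⊆ S j := by
  classical
  induction J using Finset.induction with
  | empty =>
    intro x r hr hcov
    exfalso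
    have := hcov (Metric.mem_ball_self hr)
    simpa using this
  | @insert j J' hj ih =>
    intro x r hr hcov
    by_cases hball : Metric.ball x r ⊆ S j
    · exact ⟨j, Finset.mem_insert_self _ _, x, r, hr, hball⟩
    · obtain ⟨z, hz, hznot⟩ := Set.not_subset.mp hball
      have hopen : IsOpen (S j)ᶜ := (hS j (Finset.mem_insert_self _ _)).isOpen_compl
      obtain ⟨ρ₁, hρ₁pos, hρ₁⟩ := Metric.isOpen_iff.mp hopen z hznot
      obtain ⟨ρ₂, hρ₂pos, hρ₂⟩ := Metric.isOpen_iff.mp Metric.isOpen_ball z hz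
      set ρ := min ρ₁ ρ₂ with hρ
      have hρpos : 0 < ρ := lt_min hρ₁pos hρ₂pos
      have hsub : Metric.ball z ρ ⊆ ⋃ i ∈ J', S i := by
        intro w hw
        have hw1 : w ∈ Metric.ball x r := hρ₂ (Metric.ball_subset_ball (min_le_right _ _) hw)
        have hw2 : w ∉ S j := hρ₁ (Metric.ball_subset_ball (min_le_left _ _) hw)
        have := hcov hw1
        simp only [Set.mem_iUnion] at this ⊢
        obtain ⟨i, hi, hwi⟩ := this
        rcases Finset.mem_insert.mp hi with rfl | hi'
        · exact absurd hwi hw2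
        · exact ⟨i, hi', hwi⟩
      obtain ⟨i, hi, hres⟩ := ih (fun i hi => hS i (Finset.mem_insert_of_mem hi)) z ρ hρpos hsub
      exact ⟨i, Finset.mem_insert_of_mem hi, hres⟩

/-- Attainment of the maximum of a linear functional on a (generalized) polyhedron
with pointed recession cone, when the functional is `≤ 0` on the recession cone. -/
lemma att {ι : Type} [DecidableEq ι] (A : ι → (V3 →ₗ[ℝ] ℝ)) (b : ι → ℝ) (ψ : V3 →ₗ[ℝ] ℝ) :
    ∀ (s t : Finset ι),
    ({x : V3 | (∀ i ∈ t, A i x = b i) ∧ (∀ i ∈ s, A i x ≤ b i)}).Nonempty →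
    (∀ u : V3, (∀ i ∈ t, A i u = 0) → (∀ i ∈ s, A i u ≤ 0) → (∀ i ∈ s, 0 ≤ A i u) → u = 0) →
    (∀ u : V3, (∀ i ∈ t, A i u = 0) → (∀ i ∈ s, A i u ≤ 0) → ψ u ≤ 0) →
    ∃ x, ((∀ i ∈ t, A i x = b i) ∧ (∀ i ∈ s, A i x ≤ b i)) ∧
      ∀ y, (∀ i ∈ t, A i y = b i) → (∀ i ∈ s, A i y ≤ b i) → ψ y ≤ ψ x := by
  classical
  intro s
  induction s using Finset.strongInduction with
  | _ s ih =>
    intro t hne hpt hψc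
    by_cases hcase : ∀ u : V3, (∀ i ∈ t, A i u = 0) → ψ u = 0
    · obtain ⟨xb, hxb⟩ := hne
      refine ⟨xb, hxb, fun y hyt hys => ?_⟩
      have h0 : ψ (y - xb) = 0 := by
        apply hcase
        intro i hi
        rw [map_sub, hyt i hi, hxb.1 i hi, sub_self]
      rw [map_sub] at h0
      linarith
    · push_neg at hcase
      obtain ⟨u₁, hu₁t, hu₁ψ⟩ := hcase
      -- normalize so that ψ u₀ < 0
      set u₀ : V3 := if ψ u₁ < 0 then u₁ else -u₁ with hu₀
      have hu₀t : ∀ i ∈ t, A i u₀ = 0 := by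
        intro i hi
        rw [hu₀]
        split
        · exact hu₁t i hi
        · rw [map_neg, hu₁t i hi, neg_zero]
      have hu₀ψ : ψ u₀ < 0 := by
        rw [hu₀]
        split
        · assumption
        · rw [map_neg]
          rcases lt_trichotomy (ψ u₁) 0 with h | h | h
          · exact absurd h (by assumption)
          · exact absurd h hu₁ψ
          · linarith
      set J : Finset ι := s.filter (fun i => A i u₀ < 0) with hJ
      have hJs : ∀ j ∈ J, j ∈ s := fun j hj => (Finset.mem_filter.mp hj).1
      have hJne : J.Nonempty := by
        by_contra hc
        rw [Finset.not_nonempty_iff_eq_empty] at hc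
        have h1 : ψ (-u₀) ≤ 0 := by
          apply hψc
          · intro i hi; rw [map_neg, hu₀t i hi, neg_zero]
          · intro i hi
            rw [map_neg, neg_nonpos]
            by_contra hlt
            push_neg at hlt
            have : i ∈ J := Finset.mem_filter.mpr ⟨hi, hlt⟩
            rw [hc] at this
            exact absurd this (Finset.notMem_empty i)
        rw [map_neg] at h1
        linarith
      -- the sliding step
      have hslide : ∀ x : V3, (∀ i ∈ t, A i x = b i) → (∀ i ∈ s, A i x ≤ b i) →
          ∃ j ∈ J, ∃ x' : V3, ((∀ i ∈ insert j t, A i x' = b i) ∧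
            (∀ i ∈ s.erase j, A i x' ≤ b i)) ∧ ψ x ≤ ψ x' := by
        intro x hxt hxs
        obtain ⟨j, hjJ, hjmin⟩ :=
          Finset.exists_min_image J (fun i => (b i - A i x) / (-(A i u₀))) hJne
        have hAj : A j u₀ < 0 := (Finset.mem_filter.mp hjJ).2
        set τ : ℝ := (b j - A j x) / (-(A j u₀)) with hτ
        have hτ0 : 0 ≤ τ := div_nonneg (by linarith [hxs j (hJs j hjJ)]) (by linarith)
        refine ⟨j, hjJ, x - τ • u₀, ⟨?_, ?_⟩, ?_⟩
        · intro i hi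
          rcases Finset.mem_insert.mp hi with rfl | hit
          · rw [map_sub, map_smul, smul_eq_mul]
            have hne0 : (A i u₀) ≠ 0 := ne_of_lt hAj
            have hmul : τ * A i u₀ = -(b i - A i x) := by
              rw [hτ, div_neg, neg_mul, div_mul_cancel₀ _ hne0]
            linarith
          · rw [map_sub, map_smul, smul_eq_mul, hxt i hit, hu₀t i hit, mul_zero, sub_zero]
        · intro i hi
          have his : i ∈ s := Finset.mem_of_mem_erase hi
          rw [map_sub, map_smul, smul_eq_mul]
          rcases le_or_gt 0 (A i u₀) with hpos | hneg
          · nlinarith [hxs i his]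
          · have hiJ : i ∈ J := Finset.mem_filter.mpr ⟨his, hneg⟩
            have hle := hjmin i hiJ
            have hden : 0 < -(A i u₀) := by linarith
            have h2 : τ * (-(A i u₀)) ≤ ((b i - A i x) / (-(A i u₀))) * (-(A i u₀)) :=
              mul_le_mul_of_nonneg_right hle hden.le
            rw [div_mul_cancel₀ _ hden.ne'] at h2
            nlinarith
        · rw [map_sub, map_smul, smul_eq_mul]
          nlinarith
      -- apply the induction hypothesis for each j ∈ J
      have hIH : ∀ j ∈ J,
          ({x : V3 | (∀ i ∈ insert j t, A i x = b i) ∧ (∀ i ∈ s.erase j, A i x ≤ b i)}).Nonempty →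
          ∃ x, ((∀ i ∈ insert j t, A i x = b i) ∧ (∀ i ∈ s.erase j, A i x ≤ b i)) ∧
            ∀ y, (∀ i ∈ insert j t, A i y = b i) → (∀ i ∈ s.erase j, A i y ≤ b i) →
              ψ y ≤ ψ x := by
        intro j hj hne'
        have hsub : s.erase j ⊂ s := Finset.erase_ssubset (hJs j hj)
        apply ih _ hsub (insert j t) hne'
        · intro u h1 h2 h3
          apply hpt u
          · intro i hi; exact h1 i (Finset.mem_insert_of_mem hi)
          · intro i hi
            by_cases hij : i = j
            · subst hij; rw [h1 i (Finset.mem_insert_self _ _)]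
            · exact h2 i (Finset.mem_erase.mpr ⟨hij, hi⟩)
          · intro i hi
            by_cases hij : i = j
            · subst hij; rw [h1 i (Finset.mem_insert_self _ _)]
            · exact h3 i (Finset.mem_erase.mpr ⟨hij, hi⟩)
        · intro u h1 h2
          apply hψc u
          · intro i hi; exact h1 i (Finset.mem_insert_of_mem hi)
          · intro i hi
            by_cases hij : i = j
            · subst hij; rw [h1 i (Finset.mem_insert_self _ _)]
            · exact h2 i (Finset.mem_erase.mpr ⟨hij, hi⟩)
      choose! Z hZmem hZmax using hIH
      set Jgood : Finset ι := J.filter (fun j =>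
        ({x : V3 | (∀ i ∈ insert j t, A i x = b i) ∧ (∀ i ∈ s.erase j, A i x ≤ b i)}).Nonempty)
        with hJgood
      have hJgoodne : Jgood.Nonempty := by
        obtain ⟨xb, hxb⟩ := hne
        obtain ⟨j, hjJ, x', hx', _⟩ := hslide xb hxb.1 hxb.2
        exact ⟨j, Finset.mem_filter.mpr ⟨hjJ, ⟨x', hx'⟩⟩⟩
      obtain ⟨jm, hjm, hbest⟩ := Finset.exists_max_image Jgood (fun j => ψ (Z j)) hJgoodne
      have hjmJ : jm ∈ J := (Finset.mem_filter.mp hjm).1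
      have hjmne := (Finset.mem_filter.mp hjm).2
      have hZm := hZmem jm hjmJ hjmne
      refine ⟨Z jm, ⟨?_, ?_⟩, ?_⟩
      · intro i hi; exact hZm.1 i (Finset.mem_insert_of_mem hi)
      · intro i hi
        by_cases hij : i = jm
        · subst hij; rw [hZm.1 i (Finset.mem_insert_self _ _)]
        · exact hZm.2 i (Finset.mem_erase.mpr ⟨hij, hi⟩)
      · intro y hyt hys
        obtain ⟨j, hjJ, x', hx', hψle⟩ := hslide y hyt hys
        have hjgood : j ∈ Jgood := Finset.mem_filter.mpr ⟨hjJ, ⟨x', hx'⟩⟩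
        calc ψ y ≤ ψ x' := hψle
        _ ≤ ψ (Z j) := hZmax j hjJ ((Finset.mem_filter.mp hjgood).2) x' hx'.1 hx'.2
        _ ≤ ψ (Z jm) := hbest j hjgood

lemma face_lemma (m : ℕ) (L : Fin m → (V3 →ₗ[ℝ] ℝ)) (c : Fin m → ℝ)
    (ψ χ χ₃ : V3 →ₗ[ℝ] ℝ) (d e f : ℝ)
    (hψ : ∀ x : V3, (∀ i, L i x ≤ c i) → ψ x ≤ d)
    (hχ : ∀ x : V3, (∀ i, L i x ≤ c i) → ψ x = d → χ x ≤ e)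
    (hχ₃ : ∀ x : V3, (∀ i, L i x ≤ c i) → ψ x = d → χ x = e → χ₃ x ≤ f)
    (G : Set V3)
    (hG : G = {x | (∀ i, L i x ≤ c i) ∧ ψ x = d ∧ χ x = e ∧ χ₃ x = f})
    (hGne : G.Nonempty)
    (hGK : G ≠ {x | ∀ i, L i x ≤ c i}) :
    IsFaceOf 3 {x | ∀ i, L i x ≤ c i} G := by
  classical
  set K : Set V3 := {x | ∀ i, L i x ≤ c i} with hK
  -- the active index set
  set I' : Finset (Fin m) := Finset.univ.filter (fun i => ∀ x ∈ G, L i x = c i) with hI'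
  set J₀ : Finset (Fin m) := Finset.univ.filter (fun i => ¬ ∀ x ∈ G, L i x = c i) with hJ₀
  have hwit : ∀ i ∈ J₀, ∃ w ∈ G, L i w < c i := by
    intro i hi
    have := (Finset.mem_filter.mp hi).2
    push_neg at this
    obtain ⟨w, hwG, hwne⟩ := this
    have hwK : ∀ k, L k w ≤ c k := by rw [hG] at hwG; exact hwG.1
    exact ⟨w, hwG, lt_of_le_of_ne (hwK i) hwne⟩
  choose! w hwG hwlt using hwit
  have hGconv : Convex ℝ G := by
    rw [hG]
    intro x hx y hy a b ha hb hab
    refine ⟨fun i => ?_, ?_, ?_, ?_⟩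
    · have : L i (a • x + b • y) = a * L i x + b * L i y := by simp
      rw [this]
      calc a * L i x + b * L i y ≤ a * c i + b * c i := by
            apply add_le_add
            · exact mul_le_mul_of_nonneg_left (hx.1 i) ha
            · exact mul_le_mul_of_nonneg_left (hy.1 i) hb
      _ = c i := by rw [← add_mul, hab, one_mul]
    · simp [hx.2.1, hy.2.1, ← add_mul, hab]
    · simp [hx.2.2.1, hy.2.2.1, ← add_mul, hab]
    · simp [hx.2.2.2, hy.2.2.2, ← add_mul, hab]
  -- a relative interior point
  have hx₀ : ∃ x₀ ∈ G, ∀ i ∈ J₀, L i x₀ < c i := by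
    rcases J₀.eq_empty_or_nonempty with hJe | hJne
    · obtain ⟨g, hg⟩ := hGne
      exact ⟨g, hg, fun i hi => by rw [hJe] at hi; exact absurd hi (Finset.notMem_empty i)⟩
    · set n : ℝ := (J₀.card : ℝ) with hn
      have hnpos : 0 < n := by
        rw [hn]
        exact_mod_cast Finset.card_pos.mpr hJne
      refine ⟨∑ k ∈ J₀, (n⁻¹ : ℝ) • w k, ?_, ?_⟩
      · apply hGconv.sum_mem
        · intro k hk; positivity
        · rw [Finset.sum_const, nsmul_eq_mul, hn, mul_inv_cancel₀ hnpos.ne']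
        · intro k hk; exact hwG k hk
      · intro i hi
        have hmap : L i (∑ k ∈ J₀, (n⁻¹ : ℝ) • w k) = ∑ k ∈ J₀, n⁻¹ * L i (w k) := by
          rw [map_sum]; congr 1; ext k; simp
        rw [hmap]
        have hlt : ∑ k ∈ J₀, n⁻¹ * L i (w k) < ∑ k ∈ J₀, n⁻¹ * c i := by
          apply Finset.sum_lt_sum
          · intro k hk
            have : L i (w k) ≤ c i := by
              have := hwG k hk; rw [hG] at this; exact this.1 i
            nlinarith [inv_pos.mpr hnpos]
          · exact ⟨i, hi, by nlinarith [hwlt i hi, inv_pos.mpr hnpos]⟩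
        calc ∑ k ∈ J₀, n⁻¹ * L i (w k) < ∑ k ∈ J₀, n⁻¹ * c i := hlt
        _ = n * (n⁻¹ * c i) := by rw [Finset.sum_const, nsmul_eq_mul, hn]
        _ = c i := by field_simp
  obtain ⟨x₀, hx₀G, hx₀strict⟩ := hx₀
  have hx₀G' := hx₀G
  rw [hG] at hx₀G'
  obtain ⟨hx₀K, hx₀ψ, hx₀χ, hx₀χ₃⟩ := hx₀G'
  have hx₀eq : ∀ i ∈ I', L i x₀ = c i := by
    intro i hi
    exact (Finset.mem_filter.mp hi).2 x₀ hx₀G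
  -- the key representation
  have hGrep : ∀ z : V3, (∀ i, L i z ≤ c i) → (∀ i ∈ I', L i z = c i) → z ∈ G := by
    intro z hzK hzeq
    set D : Finset (Fin m) := J₀.filter (fun i => L i z < L i x₀) with hD
    have hδ : ∃ δ : ℝ, 0 < δ ∧ ∀ i ∈ J₀, L i x₀ + δ * (L i x₀ - L i z) ≤ c i := by
      rcases D.eq_empty_or_nonempty with hDe | hDne
      · refine ⟨1, one_pos, fun i hi => ?_⟩
        have : ¬ (L i z < L i x₀) := by
          intro hc
          have : i ∈ D := Finset.mem_filter.mpr ⟨hi, hc⟩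
          rw [hDe] at this
          exact absurd this (Finset.notMem_empty i)
        push_neg at this
        have := hx₀strict i hi
        nlinarith
      · obtain ⟨j, hjD, hjmin⟩ :=
          Finset.exists_min_image D (fun i => (c i - L i x₀)/(L i x₀ - L i z)) hDne
        have hjJ₀ : j ∈ J₀ := (Finset.mem_filter.mp hjD).1
        have hjlt : L j z < L j x₀ := (Finset.mem_filter.mp hjD).2
        set δ : ℝ := (c j - L j x₀)/(L j x₀ - L j z) with hδdef
        have hδpos : 0 < δ := div_pos (by linarith [hx₀strict j hjJ₀]) (by linarith)
        refine ⟨δ, hδpos, fun i hi => ?_⟩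
        by_cases hiD : i ∈ D
        · have hilt : L i z < L i x₀ := (Finset.mem_filter.mp hiD).2
          have hle := hjmin i hiD
          have hpos : 0 < L i x₀ - L i z := by linarith
          have h2 : δ * (L i x₀ - L i z) ≤ c i - L i x₀ := by
            have := mul_le_mul_of_nonneg_right hle hpos.le
            rwa [div_mul_cancel₀ _ hpos.ne'] at this
          linarith
        · have : ¬ (L i z < L i x₀) := fun hc => hiD (Finset.mem_filter.mpr ⟨hi, hc⟩)
          push_neg at this
          nlinarith [hx₀strict i hi]
    obtain ⟨δ, hδpos, hδle⟩ := hδ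
    set y : V3 := x₀ + δ • (x₀ - z) with hy
    have hyK : ∀ i, L i y ≤ c i := by
      intro i
      have hcomp : L i y = L i x₀ + δ * (L i x₀ - L i z) := by
        rw [hy]; simp [mul_sub]
      by_cases hiI : i ∈ I'
      · rw [hcomp, hx₀eq i hiI, hzeq i hiI]
        simp
      · have hiJ : i ∈ J₀ := by
          rw [hJ₀, Finset.mem_filter]
          rw [hI', Finset.mem_filter] at hiI
          refine ⟨Finset.mem_univ i, ?_⟩
          intro hc
          exact hiI ⟨Finset.mem_univ i, hc⟩
        rw [hcomp]
        exact hδle i hiJ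
    -- now cascade through ψ, χ, χ₃
    have hψy : ψ y ≤ d := hψ y hyK
    have hψy' : ψ y = ψ x₀ + δ * (ψ x₀ - ψ z) := by rw [hy]; simp [mul_sub]
    have hψz_le : ψ z ≤ d := hψ z hzK
    have hψz : ψ z = d := by
      rw [hψy', hx₀ψ] at hψy
      nlinarith
    have hψyd : ψ y = d := by rw [hψy', hx₀ψ, hψz]; ring
    have hχy : χ y ≤ e := hχ y hyK hψyd
    have hχy' : χ y = χ x₀ + δ * (χ x₀ - χ z) := by rw [hy]; simp [mul_sub]
    have hχz_le : χ z ≤ e := hχ z hzK hψz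
    have hχz : χ z = e := by
      rw [hχy', hx₀χ] at hχy
      nlinarith
    have hχye : χ y = e := by rw [hχy', hx₀χ, hχz]; ring
    have hχ₃y : χ₃ y ≤ f := hχ₃ y hyK hψyd hχye
    have hχ₃y' : χ₃ y = χ₃ x₀ + δ * (χ₃ x₀ - χ₃ z) := by rw [hy]; simp [mul_sub]
    have hχ₃z_le : χ₃ z ≤ f := hχ₃ z hzK hψz hχz
    have hχ₃z : χ₃ z = f := by
      rw [hχ₃y', hx₀χ₃] at hχ₃y
      nlinarith
    rw [hG]
    exact ⟨hzK, hψz, hχz, hχ₃z⟩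
  -- the exposing functional
  set Θ : V3 →ₗ[ℝ] ℝ := ∑ i ∈ I', L i with hΘ
  set E : ℝ := ∑ i ∈ I', c i with hE
  have hΘapp : ∀ x : V3, Θ x = ∑ i ∈ I', L i x := by
    intro x
    rw [hΘ]
    simp [LinearMap.sum_apply]
  have hΘle : ∀ x ∈ K, Θ x ≤ E := by
    intro x hx
    rw [hΘapp, hE]
    exact Finset.sum_le_sum (fun i _ => hx i)
  have hGfin : G = K ∩ {x | Θ x = E} := by
    ext z
    constructor
    · intro hz
      have hzG := hz
      rw [hG] at hz
      refine ⟨hz.1, ?_⟩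
      rw [Set.mem_setOf_eq, hΘapp, hE]
      apply Finset.sum_congr rfl
      intro i hi
      exact (Finset.mem_filter.mp hi).2 z hzG
    · rintro ⟨hzK, hzΘ⟩
      apply hGrep z hzK
      intro i hi
      rw [Set.mem_setOf_eq, hΘapp, hE] at hzΘ
      have hsum : ∑ k ∈ I', (c k - L k z) = 0 := by
        rw [Finset.sum_sub_distrib, hzΘ, sub_self]
      have heach := (Finset.sum_eq_zero_iff_of_nonneg
        (fun k hk => by linarith [hzK k] : ∀ k ∈ I', (0:ℝ) ≤ c k - L k z)).mp hsum
      have := heach i hi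
      linarith
  have hΘ0 : Θ ≠ 0 := by
    intro hc
    apply hGK
    obtain ⟨g, hg⟩ := hGne
    have hgΘ : Θ g = E := by
      rw [hGfin] at hg
      exact hg.2
    rw [hc] at hgΘ
    simp at hgΘ
    rw [hGfin, ← hgΘ, hc]
    simp [hK]
  obtain ⟨g, hg⟩ := hGne
  refine ⟨Θ, E, hΘ0, ⟨g, by rw [hGfin] at hg; exact hg⟩, hΘle, hGfin⟩

lemma polyDim_singleton (q : V3) : polyDim 3 {q} = 0 := by
  unfold polyDim
  rw [direction_affineSpan, vectorSpan_singleton]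
  exact finrank_bot ℝ V3

set_option maxHeartbeats 2000000 in
lemma edge_construct (m : ℕ) (L : Fin m → (V3 →ₗ[ℝ] ℝ)) (c : Fin m → ℝ)
    (hKne : ({x : V3 | ∀ i, L i x ≤ c i}).Nonempty)
    (hdim : polyDim 3 {x : V3 | ∀ i, L i x ≤ c i} = 3)
    (φ : V3 →ₗ[ℝ] ℝ)
    (hφ : ∀ u : V3, u ≠ 0 → (∀ i, L i u ≤ 0) → φ u < 0)
    (b : V3) (hb0 : b ≠ 0) (hbC : ∀ i, L i b ≤ 0)
    (ψ : V3 →ₗ[ℝ] ℝ) (hψ0 : ψ ≠ 0) (hψb : ψ b = 0)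
    (hψC : ∀ u : V3, (∀ i, L i u ≤ 0) → ψ u ≤ 0)
    (hker : ∀ u : V3, (∀ i, L i u ≤ 0) → ψ u = 0 → ∃ s : ℝ, u = s • b) :
    ∃ A, IsUnboundedEdgeWithDir 3 {x : V3 | ∀ i, L i x ≤ c i} A b := by
  classical
  set K : Set V3 := {x | ∀ i, L i x ≤ c i} with hK
  -- pointedness helper
  have hpt0 : ∀ u : V3, (∀ i, L i u ≤ 0) → (∀ i, 0 ≤ L i u) → u = 0 := by
    intro u h1 h2
    by_contra hu
    have ha : φ u < 0 := hφ u hu h1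
    have hb' : φ (-u) < 0 := hφ (-u) (neg_ne_zero.mpr hu) (fun i => by rw [map_neg]; linarith [h2 i])
    rw [map_neg] at hb'
    linarith
  -- Step 1: maximize ψ over K
  obtain ⟨xs, hxs, hxsmax⟩ := att L c ψ Finset.univ ∅
    (by
      obtain ⟨x, hx⟩ := hKne
      exact ⟨x, fun i hi => absurd hi (Finset.notMem_empty i), fun i _ => hx i⟩)
    (by
      intro u _ h2 h3
      exact hpt0 u (fun i => h2 i (Finset.mem_univ i)) (fun i => h3 i (Finset.mem_univ i)))
    (by
      intro u _ h2
      exact hψC u (fun i => h2 i (Finset.mem_univ i)))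
  set d : ℝ := ψ xs with hd
  have hxsK : xs ∈ K := fun i => hxs.2 i (Finset.mem_univ i)
  have hdmax : ∀ y ∈ K, ψ y ≤ d := by
    intro y hy
    exact hxsmax y (fun i hi => absurd hi (Finset.notMem_empty i)) (fun i _ => hy i)
  -- Step 2: choose χ
  obtain ⟨χ, hχb, hχind⟩ := exists_chi ψ hψ0 b hb0 hψb
  -- Step 3: maximize χ over F = K ∩ {ψ = d}
  set ι₂ : Type := Sum (Fin m) Unit with hι₂
  set A₂ : ι₂ → (V3 →ₗ[ℝ] ℝ) := Sum.elim L (fun _ => ψ) with hA₂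
  set c₂ : ι₂ → ℝ := Sum.elim c (fun _ => d) with hc₂
  obtain ⟨ys, hys, hysmax⟩ := att A₂ c₂ χ (Finset.univ.image Sum.inl) {Sum.inr ()}
    (by
      refine ⟨xs, ?_, ?_⟩
      · intro i hi
        rw [Finset.mem_singleton] at hi
        subst hi
        exact hd.symm
      · intro i hi
        rw [Finset.mem_image] at hi
        obtain ⟨j, _, rfl⟩ := hi
        exact hxsK j)
    (by
      intro u h1 h2 h3
      apply hpt0 u
      · intro i
        exact h2 (Sum.inl i) (Finset.mem_image.mpr ⟨i, Finset.mem_univ i, rfl⟩)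
      · intro i
        exact h3 (Sum.inl i) (Finset.mem_image.mpr ⟨i, Finset.mem_univ i, rfl⟩))
    (by
      intro u h1 h2
      have hC : ∀ i, L i u ≤ 0 := fun i =>
        h2 (Sum.inl i) (Finset.mem_image.mpr ⟨i, Finset.mem_univ i, rfl⟩)
      have hψu : ψ u = 0 := h1 (Sum.inr ()) (Finset.mem_singleton_self _)
      obtain ⟨s, rfl⟩ := hker u hC hψu
      rw [map_smul, hχb, smul_eq_mul, mul_zero])
  set e : ℝ := χ ys with he
  have hysψ : ψ ys = d := hys.1 (Sum.inr ()) (Finset.mem_singleton_self _)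
  have hysK : ys ∈ K := by
    intro i
    exact hys.2 (Sum.inl i) (Finset.mem_image.mpr ⟨i, Finset.mem_univ i, rfl⟩)
  have hemax : ∀ y ∈ K, ψ y = d → χ y ≤ e := by
    intro y hy hyψ
    apply hysmax y
    · intro i hi
      rw [Finset.mem_singleton] at hi
      subst hi
      exact hyψ
    · intro i hi
      rw [Finset.mem_image] at hi
      obtain ⟨j, _, rfl⟩ := hi
      exact hy j
  -- the candidate edge
  set F' : Set V3 := {x | (∀ i, L i x ≤ c i) ∧ ψ x = d ∧ χ x = e} with hF'
  have hysF' : ys ∈ F' := ⟨hysK, hysψ, rfl⟩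
  -- F' lies on a line in direction b
  have hkspan := ker_inter_eq_span ψ χ b hb0 hψb hχb hψ0 hχind
  have hdir : ∀ x ∈ F', ∃ s : ℝ, x = ys + s • b := by
    rintro x ⟨hxK, hxψ, hxχ⟩
    have hmem : x - ys ∈ LinearMap.ker ψ ⊓ LinearMap.ker χ := by
      rw [Submodule.mem_inf]
      constructor
      · rw [LinearMap.mem_ker, map_sub, hxψ, hysψ, sub_self]
      · rw [LinearMap.mem_ker, map_sub, hxχ, ← he, sub_self]
    rw [hkspan, Submodule.mem_span_singleton] at hmem
    obtain ⟨s, hs⟩ := hmem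
    exact ⟨s, by rw [hs]; abel⟩
  set S : Set ℝ := {s : ℝ | ys + s • b ∈ F'} with hS
  have h0S : (0:ℝ) ∈ S := by
    rw [hS]
    simpa using hysF'
  have hSup : ∀ s ∈ S, ∀ s', s ≤ s' → s' ∈ S := by
    intro s hs s' hss'
    rw [hS, Set.mem_setOf_eq] at hs ⊢
    obtain ⟨h1, h2, h3⟩ := hs
    refine ⟨fun i => ?_, ?_, ?_⟩
    · have : L i (ys + s' • b) = L i (ys + s • b) + (s' - s) * L i b := by
        simp [map_add, map_smul, smul_eq_mul]
        ring
      rw [this]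
      have := hbC i
      nlinarith [h1 i]
    · have : ψ (ys + s' • b) = ψ (ys + s • b) + (s' - s) * ψ b := by
        simp [map_add, map_smul, smul_eq_mul]
        ring
      rw [this, hψb, h2]
      ring
    · have : χ (ys + s' • b) = χ (ys + s • b) + (s' - s) * χ b := by
        simp [map_add, map_smul, smul_eq_mul]
        ring
      rw [this, hχb, h3]
      ring
  have hSbdd : BddBelow S := by
    by_contra hc
    rw [not_bddBelow_iff] at hc
    have hLb : ∀ i, L i b = 0 := by
      intro i
      by_contra hne
      have hlt : L i b < 0 := lt_of_le_of_ne (hbC i) hne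
      obtain ⟨s, hsS, hslt⟩ := hc ((c i - L i ys) / (L i b))
      have hcon : L i (ys + s • b) ≤ c i := by
        rw [hS, Set.mem_setOf_eq] at hsS
        exact hsS.1 i
      rw [map_add, map_smul, smul_eq_mul] at hcon
      have hmul := mul_lt_mul_of_neg_right hslt hlt
      rw [div_mul_cancel₀ _ hlt.ne] at hmul
      linarith
    have h1 : φ b < 0 := hφ b hb0 hbC
    have h2 : φ (-b) < 0 := hφ (-b) (neg_ne_zero.mpr hb0) (fun i => by rw [map_neg, hLb i]; simp)
    rw [map_neg] at h2
    linarith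
  have hScl : IsClosed S := by
    have hcont : Continuous (fun s : ℝ => ys + s • b) := by
      apply Continuous.add continuous_const
      exact continuous_id.smul continuous_const
    have hF'cl : IsClosed F' := by
      rw [hF']
      have h1 : IsClosed {x : V3 | ∀ i, L i x ≤ c i} := by
        have : {x : V3 | ∀ i, L i x ≤ c i} = ⋂ i, {x : V3 | L i x ≤ c i} := by
          ext x; simp
        rw [this]
        exact isClosed_iInter (fun i =>
          isClosed_le (L i).continuous_of_finiteDimensional continuous_const)
      have h2 : IsClosed {x : V3 | ψ x = d} :=
        isClosed_eq ψ.continuous_of_finiteDimensional continuous_const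
      have h3 : IsClosed {x : V3 | χ x = e} :=
        isClosed_eq χ.continuous_of_finiteDimensional continuous_const
      have : {x : V3 | (∀ i, L i x ≤ c i) ∧ ψ x = d ∧ χ x = e}
          = {x : V3 | ∀ i, L i x ≤ c i} ∩ ({x : V3 | ψ x = d} ∩ {x : V3 | χ x = e}) := by
        ext x
        simp [Set.mem_setOf_eq, Set.mem_inter_iff, and_assoc]
      rw [this]
      exact h1.inter (h2.inter h3)
    exact IsClosed.preimage hcont hF'cl
  set m₀ : ℝ := sInf S with hm₀def
  have hm₀S : m₀ ∈ S := hScl.csInf_mem ⟨0, h0S⟩ hSbdd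
  set q : V3 := ys + m₀ • b with hq
  have hray : F' = {x : V3 | ∃ t : ℝ, 0 ≤ t ∧ x = q + t • b} := by
    ext x
    constructor
    · intro hx
      obtain ⟨s, hs⟩ := hdir x hx
      have hsS : s ∈ S := by
        rw [hS, Set.mem_setOf_eq, ← hs]
        exact hx
      have hle : m₀ ≤ s := csInf_le hSbdd hsS
      refine ⟨s - m₀, by linarith, ?_⟩
      rw [hs, hq]
      rw [add_assoc, ← add_smul]
      ring_nf
    · rintro ⟨t, ht, rfl⟩
      have : q + t • b = ys + (m₀ + t) • b := by
        rw [hq, add_assoc, ← add_smul]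
      rw [this]
      exact hSup m₀ hm₀S (m₀ + t) (by linarith)
  have hqF' : q ∈ F' := by
    rw [hray]
    exact ⟨0, le_refl 0, by simp⟩
  -- the third functional, for the vertex
  obtain ⟨k, hk⟩ : ∃ k, b k ≠ 0 := by
    by_contra hcon
    push_neg at hcon
    exact hb0 (funext hcon)
  set χ₃ : V3 →ₗ[ℝ] ℝ := if 0 < b k then -(LinearMap.proj k) else LinearMap.proj k with hχ₃def
  have hχ₃b : χ₃ b < 0 := by
    rw [hχ₃def]
    rcases lt_trichotomy (b k) 0 with h | h | h
    · rw [if_neg (by linarith)]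
      exact h
    · exact absurd h hk
    · rw [if_pos h]
      simp only [LinearMap.neg_apply, LinearMap.proj_apply]
      linarith
  -- identify {x ∈ F' | χ₃ x = χ₃ q} = {q}
  have hrayχ₃ : ∀ x ∈ F', χ₃ x ≤ χ₃ q := by
    intro x hx
    rw [hray] at hx
    obtain ⟨t, ht, rfl⟩ := hx
    rw [map_add, map_smul, smul_eq_mul]
    nlinarith
  have hsingle : {x : V3 | (∀ i, L i x ≤ c i) ∧ ψ x = d ∧ χ x = e ∧ χ₃ x = χ₃ q} = {q} := by
    ext x
    constructor
    · rintro ⟨h1, h2, h3, h4⟩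
      have hxF' : x ∈ F' := ⟨h1, h2, h3⟩
      rw [hray] at hxF'
      obtain ⟨t, ht, rfl⟩ := hxF'
      rw [map_add, map_smul, smul_eq_mul] at h4
      have ht0 : t = 0 := by nlinarith
      rw [ht0]
      simp
    · rintro rfl
      obtain ⟨h1, h2, h3⟩ := hqF'
      exact ⟨h1, h2, h3, rfl⟩
  -- K has more than one point (dimension 3)
  have hdimK : polyDim 3 K = 3 := by rw [hK]; exact hdim
  have hKbig : ∀ z : V3, K ≠ ({z} : Set V3) := by
    intro z hcon
    rw [hcon, polyDim_singleton z] at hdimK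
    exact absurd hdimK (by norm_num)
  -- vertex
  have hvertex : IsVertexOf 3 K q := by
    have hface := face_lemma m L c ψ χ χ₃ d e (χ₃ q)
      (fun x hx => hdmax x hx)
      (fun x hx hψx => hemax x hx hψx)
      (by
        intro x hx hψx hχx
        exact hrayχ₃ x ⟨hx, hψx, hχx⟩)
      {q} hsingle.symm ⟨q, rfl⟩
      (by
        intro hcon
        exact hKbig q hcon.symm)
    exact hface
  -- the edge is a face
  have hedgeface : IsFaceOf 3 K F' := by
    apply face_lemma m L c ψ χ (0 : V3 →ₗ[ℝ] ℝ) d e 0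
      (fun x hx => hdmax x hx)
      (fun x hx hψx => hemax x hx hψx)
      (fun x _ _ _ => le_refl 0)
    · rw [hF']
      ext x
      simp [Set.mem_setOf_eq]
    · exact ⟨ys, hysF'⟩
    · intro hcon
      have h1 : polyDim 3 F' = 1 := by
        rw [hray]
        exact polyDim_ray q b hb0
      have h3 : polyDim 3 F' = 3 := by rw [hcon]; exact hdim
      rw [h1] at h3
      exact absurd h3 (by norm_num)
  refine ⟨F', ⟨hedgeface, ?_⟩, ?_, hb0, q, hvertex, hray⟩
  · rw [hray]
    exact polyDim_ray q b hb0
  · rw [hray]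
    exact ray_unbounded q b hb0

lemma pin (m : ℕ) (L : Fin m → (V3 →ₗ[ℝ] ℝ)) (φ : V3 →ₗ[ℝ] ℝ)
    (hφ : ∀ u : V3, u ≠ 0 → (∀ i, L i u ≤ 0) → φ u < 0)
    (χ' : V3 →ₗ[ℝ] ℝ) (M' : ℝ)
    (Bs : Set V3) (hBs : Bs = {z : V3 | φ z = -1 ∧ χ' z = M' ∧ ∀ i, L i z ≤ 0})
    (hne : Bs.Nonempty) :
    ∃ b₀ ∈ Bs, ∀ u : V3, φ u = 0 → χ' u = 0 → (∀ i, L i b₀ = 0 → L i u = 0) → u = 0 := by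
  classical
  set Iact : V3 → Finset (Fin m) := fun z => Finset.univ.filter (fun i => L i z = 0) with hIact
  set T : Finset ℕ := (Finset.range (m+1)).filter (fun k => ∃ z ∈ Bs, (Iact z).card = k) with hT
  have hTne : T.Nonempty := by
    obtain ⟨z₀, hz₀⟩ := hne
    refine ⟨(Iact z₀).card, Finset.mem_filter.mpr ⟨?_, z₀, hz₀, rfl⟩⟩
    rw [Finset.mem_range]
    calc (Iact z₀).card ≤ Finset.univ.card := Finset.card_filter_le _ _
    _ = m := by simp
    _ < m + 1 := Nat.lt_succ_self m
  set kmax : ℕ := T.max' hTne with hkmax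
  have hkmem : kmax ∈ T := T.max'_mem hTne
  obtain ⟨b₀, hb₀Bs, hb₀card⟩ := (Finset.mem_filter.mp hkmem).2
  have hmaximal : ∀ z ∈ Bs, (Iact z).card ≤ kmax := by
    intro z hz
    apply Finset.le_max'
    refine Finset.mem_filter.mpr ⟨?_, z, hz, rfl⟩
    rw [Finset.mem_range]
    calc (Iact z).card ≤ Finset.univ.card := Finset.card_filter_le _ _
    _ = m := by simp
    _ < m + 1 := Nat.lt_succ_self m
  refine ⟨b₀, hb₀Bs, ?_⟩
  intro u hφu hχ'u hIu
  by_contra hu0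
  rw [hBs, Set.mem_setOf_eq] at hb₀Bs
  obtain ⟨hbφ, hbχ, hbL⟩ := hb₀Bs
  have hJ'ne : ∃ i, 0 < L i u := by
    by_contra hcon
    push_neg at hcon
    have := hφ u hu0 hcon
    rw [hφu] at this
    exact absurd this (by norm_num)
  set J' : Finset (Fin m) := Finset.univ.filter (fun i => 0 < L i u) with hJ'
  have hJ'nonempty : J'.Nonempty := by
    obtain ⟨i, hi⟩ := hJ'ne
    exact ⟨i, Finset.mem_filter.mpr ⟨Finset.mem_univ i, hi⟩⟩
  have hJ'neg : ∀ i ∈ J', L i b₀ < 0 := by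
    intro i hi
    have hpos : 0 < L i u := (Finset.mem_filter.mp hi).2
    rcases lt_or_eq_of_le (hbL i) with h | h
    · exact h
    · exfalso
      have := hIu i h
      linarith
  obtain ⟨j', hj'J, hj'min⟩ :=
    Finset.exists_min_image J' (fun i => (-(L i b₀)) / (L i u)) hJ'nonempty
  have hj'pos : 0 < L j' u := (Finset.mem_filter.mp hj'J).2
  set τ : ℝ := (-(L j' b₀)) / (L j' u) with hτ
  have hτpos : 0 < τ := div_pos (by linarith [hJ'neg j' hj'J]) hj'pos
  set b' : V3 := b₀ + τ • u with hb'
  have hb'Bs : b' ∈ Bs := by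
    rw [hBs, Set.mem_setOf_eq]
    refine ⟨?_, ?_, ?_⟩
    · rw [hb', map_add, map_smul, smul_eq_mul, hφu, hbφ]; ring
    · rw [hb', map_add, map_smul, smul_eq_mul, hχ'u, hbχ]; ring
    · intro i
      rw [hb', map_add, map_smul, smul_eq_mul]
      rcases le_or_gt (L i u) 0 with h | h
      · nlinarith [hbL i]
      · have hiJ : i ∈ J' := Finset.mem_filter.mpr ⟨Finset.mem_univ i, h⟩
        have hle := hj'min i hiJ
        have h2 : τ * L i u ≤ (-(L i b₀)) / (L i u) * L i u :=
          mul_le_mul_of_nonneg_right hle h.le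
        rw [div_mul_cancel₀ _ h.ne'] at h2
        linarith
  have hsubset : insert j' (Iact b₀) ⊆ Iact b' := by
    intro i hi
    rcases Finset.mem_insert.mp hi with rfl | hi'
    · refine Finset.mem_filter.mpr ⟨Finset.mem_univ _, ?_⟩
      rw [hb', map_add, map_smul, smul_eq_mul, hτ, div_mul_cancel₀ _ hj'pos.ne']
      ring
    · have heq : L i b₀ = 0 := (Finset.mem_filter.mp hi').2
      refine Finset.mem_filter.mpr ⟨Finset.mem_univ _, ?_⟩
      rw [hb', map_add, map_smul, smul_eq_mul, heq, hIu i heq]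
      ring
  have hj'not : j' ∉ Iact b₀ := by
    intro hc
    have := (Finset.mem_filter.mp hc).2
    have := hJ'neg j' hj'J
    linarith
  have hcard : kmax + 1 ≤ (Iact b').card := by
    calc kmax + 1 = (Iact b₀).card + 1 := by rw [hb₀card]
    _ = (insert j' (Iact b₀)).card := (Finset.card_insert_of_notMem hj'not).symm
    _ ≤ (Iact b').card := Finset.card_le_card hsubset
  have := hmaximal b' hb'Bs
  omega

set_option maxHeartbeats 2000000 in
lemma rec_dep (m : ℕ) (L : Fin m → (V3 →ₗ[ℝ] ℝ)) (c : Fin m → ℝ)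
    (hKne : ({x : V3 | ∀ i, L i x ≤ c i}).Nonempty)
    (hdim : polyDim 3 {x : V3 | ∀ i, L i x ≤ c i} = 3)
    (φ : V3 →ₗ[ℝ] ℝ)
    (hφ : ∀ u : V3, u ≠ 0 → (∀ i, L i u ≤ 0) → φ u < 0)
    (hpar : ∀ (A₁ A₂ : Set V3) (v₁ v₂ : V3),
      IsUnboundedEdgeWithDir 3 {x : V3 | ∀ i, L i x ≤ c i} A₁ v₁ →
      IsUnboundedEdgeWithDir 3 {x : V3 | ∀ i, L i x ≤ c i} A₂ v₂ →
      ¬ LinearIndependent ℝ ![v₁, v₂])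
    (u w : V3) (hu : ∀ i, L i u ≤ 0) (hw : ∀ i, L i w ≤ 0) :
    ¬ LinearIndependent ℝ ![u, w] := by
  classical
  intro hind
  have hu0 : u ≠ 0 := by
    intro hc
    rw [LinearIndependent.pair_iff] at hind
    have := (hind 1 0 (by rw [hc]; simp)).1
    norm_num at this
  have hw0 : w ≠ 0 := by
    intro hc
    rw [LinearIndependent.pair_iff] at hind
    have := (hind 0 1 (by rw [hc]; simp)).2
    norm_num at this
  have hnodep : ∀ a a' : ℝ, ¬ (u = a • w ∧ True) := by
    intro a a' ⟨hc, _⟩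
    rw [LinearIndependent.pair_iff] at hind
    have := (hind 1 (-a) (by rw [hc]; module)).1
    norm_num at this
  have hφu : φ u < 0 := hφ u hu0 hu
  have hφw : φ w < 0 := hφ w hw0 hw
  -- normalized vectors
  have hnorm : ∀ v : V3, v ≠ 0 → (∀ i, L i v ≤ 0) →
      φ ((-(φ v))⁻¹ • v) = -1 ∧ (∀ i, L i ((-(φ v))⁻¹ • v) ≤ 0) ∧
        v = (-(φ v)) • ((-(φ v))⁻¹ • v) := by
    intro v hv0 hvC
    have hφv : φ v < 0 := hφ v hv0 hvC
    have hpos : 0 < -(φ v) := by linarith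
    refine ⟨?_, ?_, ?_⟩
    · rw [map_smul, smul_eq_mul]
      field_simp
      rw [div_self hφv.ne]
    · intro i
      rw [map_smul, smul_eq_mul]
      have := hvC i
      have hip : 0 < (-(φ v))⁻¹ := by positivity
      nlinarith
    · rw [smul_smul, mul_inv_cancel₀ hpos.ne', one_smul]
  set uh : V3 := (-(φ u))⁻¹ • u with huh
  set wh : V3 := (-(φ w))⁻¹ • w with hwh
  obtain ⟨huhφ, huhC, hurep⟩ := hnorm u hu0 hu
  obtain ⟨hwhφ, hwhC, hwrep⟩ := hnorm w hw0 hw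
  have huhwh : uh ≠ wh := by
    intro hc
    apply hnodep ((-(φ u)) * (-(φ w))⁻¹) 0
    refine ⟨?_, trivial⟩
    rw [mul_smul]
    calc u = (-(φ u)) • uh := hurep
    _ = (-(φ u)) • wh := by rw [hc]
    _ = (-(φ u)) • ((-(φ w))⁻¹ • w) := by rw [hwh]
  -- first pinned point b₁
  obtain ⟨b₁, hb₁Bs, hN1⟩ := pin m L φ hφ (0 : V3 →ₗ[ℝ] ℝ) 0
    {z : V3 | φ z = -1 ∧ (0 : V3 →ₗ[ℝ] ℝ) z = 0 ∧ ∀ i, L i z ≤ 0} rfl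
    ⟨uh, huhφ, by simp, huhC⟩
  obtain ⟨hb₁φ, -, hb₁C⟩ := hb₁Bs
  have hb₁0 : b₁ ≠ 0 := by
    intro hc
    rw [hc, map_zero] at hb₁φ
    norm_num at hb₁φ
  -- first exposing functional
  set I₁ : Finset (Fin m) := Finset.univ.filter (fun i => L i b₁ = 0) with hI₁
  set ψ₁ : V3 →ₗ[ℝ] ℝ := ∑ i ∈ I₁, L i with hψ₁
  have hψ₁app : ∀ x : V3, ψ₁ x = ∑ i ∈ I₁, L i x := by
    intro x; rw [hψ₁]; simp [LinearMap.sum_apply]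
  have hψ₁C : ∀ v : V3, (∀ i, L i v ≤ 0) → ψ₁ v ≤ 0 := by
    intro v hv
    rw [hψ₁app]
    exact Finset.sum_nonpos (fun i _ => hv i)
  have hψ₁b : ψ₁ b₁ = 0 := by
    rw [hψ₁app]
    exact Finset.sum_eq_zero (fun i hi => (Finset.mem_filter.mp hi).2)
  have hker₁ : ∀ v : V3, (∀ i, L i v ≤ 0) → ψ₁ v = 0 → ∃ s : ℝ, v = s • b₁ := by
    intro v hvC hvψ
    by_cases hv0 : v = 0
    · exact ⟨0, by rw [hv0, zero_smul]⟩
    · have heach : ∀ i ∈ I₁, L i v = 0 := by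
        rw [hψ₁app] at hvψ
        have hsum : ∑ i ∈ I₁, (-(L i v)) = 0 := by
          rw [Finset.sum_neg_distrib, hvψ, neg_zero]
        have := (Finset.sum_eq_zero_iff_of_nonneg
          (fun i _ => by linarith [hvC i] : ∀ i ∈ I₁, (0:ℝ) ≤ -(L i v))).mp hsum
        intro i hi
        linarith [this i hi]
      obtain ⟨hvhφ, hvhC, hvrep⟩ := hnorm v hv0 hvC
      have hdiff : (-(φ v))⁻¹ • v - b₁ = 0 := by
        apply hN1
        · rw [map_sub, hvhφ, hb₁φ]; ring
        · simp
        · intro i hib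
          have hiI : i ∈ I₁ := Finset.mem_filter.mpr ⟨Finset.mem_univ i, hib⟩
          rw [map_sub, hib, map_smul, smul_eq_mul, heach i hiI]
          ring
      refine ⟨-(φ v), ?_⟩
      rw [sub_eq_zero] at hdiff
      rw [← hdiff]
      exact hvrep
  have hψ₁0 : ψ₁ ≠ 0 := by
    intro hc
    -- then both u and w are multiples of b₁
    obtain ⟨s, hs⟩ := hker₁ u hu (by rw [hc]; rfl)
    obtain ⟨s', hs'⟩ := hker₁ w hw (by rw [hc]; rfl)
    have hs0 : s ≠ 0 := by
      intro h0
      rw [h0, zero_smul] at hs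
      exact hu0 hs
    have hs'0 : s' ≠ 0 := by
      intro h0
      rw [h0, zero_smul] at hs'
      exact hw0 hs'
    apply hnodep (s * s'⁻¹) 0
    refine ⟨?_, trivial⟩
    rw [hs, hs', smul_smul]
    congr 1
    field_simp
  -- the first edge
  obtain ⟨A₁, hA₁⟩ := edge_construct m L c hKne hdim φ hφ b₁ hb₁0 hb₁C ψ₁ hψ₁0 hψ₁b hψ₁C hker₁
  -- a separating point z ≠ b₁ in the base
  set z : V3 := if uh = b₁ then wh else uh with hz
  have hzB : φ z = -1 ∧ ∀ i, L i z ≤ 0 := by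
    rw [hz]; split
    · exact ⟨hwhφ, hwhC⟩
    · exact ⟨huhφ, huhC⟩
  have hzb₁ : z ≠ b₁ := by
    rw [hz]; split
    · rename_i h
      rw [← h]
      exact fun hc => huhwh hc.symm
    · assumption
  obtain ⟨k, hk⟩ : ∃ k, z k ≠ b₁ k := by
    by_contra hcon
    push_neg at hcon
    exact hzb₁ (funext hcon)
  set χ₀ : V3 →ₗ[ℝ] ℝ := if b₁ k < z k then LinearMap.proj k else -(LinearMap.proj k) with hχ₀
  have hχ₀sep : χ₀ b₁ < χ₀ z := by
    rw [hχ₀]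
    rcases lt_trichotomy (b₁ k) (z k) with h | h | h
    · rw [if_pos h]
      exact h
    · exact absurd h.symm hk
    · rw [if_neg (by linarith)]
      simp only [LinearMap.neg_apply, LinearMap.proj_apply]
      linarith
  -- the base B is compact
  set B : Set V3 := {z : V3 | φ z = -1 ∧ ∀ i, L i z ≤ 0} with hB
  have hBclosed : IsClosed B := by
    have h1 : IsClosed {z : V3 | φ z = -1} :=
      isClosed_eq φ.continuous_of_finiteDimensional continuous_const
    have h2 : IsClosed {z : V3 | ∀ i, L i z ≤ 0} := by
      have : {z : V3 | ∀ i, L i z ≤ 0} = ⋂ i, {z : V3 | L i z ≤ 0} := by ext x; simp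
      rw [this]
      exact isClosed_iInter (fun i =>
        isClosed_le (L i).continuous_of_finiteDimensional continuous_const)
    have : B = {z : V3 | φ z = -1} ∩ {z : V3 | ∀ i, L i z ≤ 0} := by
      rw [hB]; ext x; simp [Set.mem_setOf_eq, Set.mem_inter_iff]
    rw [this]
    exact h1.inter h2
  have hBbdd : IsBounded B := by
    by_contra hcon
    set A' : (Fin m ⊕ Bool) → (V3 →ₗ[ℝ] ℝ) :=
      Sum.elim L (fun s => if s then φ else -φ) with hA'
    set b' : (Fin m ⊕ Bool) → ℝ := Sum.elim (fun _ => 0) (fun s => if s then -1 else 1) with hb'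
    have hBeq : B = {x : V3 | ∀ i, A' i x ≤ b' i} := by
      rw [hB]
      ext x
      simp only [Set.mem_setOf_eq, hA', hb']
      constructor
      · rintro ⟨h1, h2⟩ i
        rcases i with i | s
        · exact h2 i
        · rcases s with _ | _ <;> simp [h1]
      · intro h
        constructor
        · have ht := h (Sum.inr true)
          have hf := h (Sum.inr false)
          simp at ht hf
          linarith
        · intro i
          exact h (Sum.inl i)
    rw [hBeq] at hcon
    obtain ⟨v, hv0, hvle⟩ := unbounded_rec A' b' hcon
    have hvC : ∀ i, L i v ≤ 0 := fun i => hvle (Sum.inl i)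
    have hφ1 := hvle (Sum.inr true)
    have hφ2 := hvle (Sum.inr false)
    simp [hA'] at hφ1 hφ2
    have := hφ v hv0 hvC
    linarith
  have hBcompact : IsCompact B := Metric.isCompact_iff_isClosed_bounded.mpr ⟨hBclosed, hBbdd⟩
  have hBne : B.Nonempty := ⟨uh, huhφ, huhC⟩
  obtain ⟨zM, hzMB, hzMmax⟩ := hBcompact.exists_isMaxOn hBne
    (χ₀.continuous_of_finiteDimensional.continuousOn)
  set M : ℝ := χ₀ zM with hM
  have hMmax : ∀ y ∈ B, χ₀ y ≤ M := fun y hy => hzMmax hy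
  -- second pinned point b₂
  obtain ⟨b₂, hb₂Bs, hN2⟩ := pin m L φ hφ χ₀ M
    {z : V3 | φ z = -1 ∧ χ₀ z = M ∧ ∀ i, L i z ≤ 0} rfl
    ⟨zM, hzMB.1, rfl, hzMB.2⟩
  obtain ⟨hb₂φ, hb₂χ, hb₂C⟩ := hb₂Bs
  have hb₂0 : b₂ ≠ 0 := by
    intro hc
    rw [hc, map_zero] at hb₂φ
    norm_num at hb₂φ
  -- the tilted functional
  set cht : V3 →ₗ[ℝ] ℝ := χ₀ + M • φ with hcht
  have hchtC : ∀ v : V3, (∀ i, L i v ≤ 0) → cht v ≤ 0 := by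
    intro v hvC
    by_cases hv0 : v = 0
    · rw [hv0, map_zero]
    · obtain ⟨hvhφ, hvhC, hvrep⟩ := hnorm v hv0 hvC
      have hφv : φ v < 0 := hφ v hv0 hvC
      have hle : χ₀ ((-(φ v))⁻¹ • v) ≤ M := hMmax _ ⟨hvhφ, hvhC⟩
      rw [map_smul, smul_eq_mul] at hle
      have hpos : 0 < -(φ v) := by linarith
      rw [hcht]
      simp only [LinearMap.add_apply, LinearMap.smul_apply, smul_eq_mul]
      have h2 : χ₀ v ≤ M * (-(φ v)) := by
        have := mul_le_mul_of_nonneg_left hle hpos.le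
        rw [← mul_assoc, mul_inv_cancel₀ hpos.ne', one_mul] at this
        linarith [this]
      nlinarith
  have hchtb₂ : cht b₂ = 0 := by
    rw [hcht]
    simp only [LinearMap.add_apply, LinearMap.smul_apply, smul_eq_mul]
    rw [hb₂χ, hb₂φ]
    ring
  have hchtb₁ : cht b₁ < 0 := by
    rw [hcht]
    simp only [LinearMap.add_apply, LinearMap.smul_apply, smul_eq_mul]
    rw [hb₁φ]
    have h1 : χ₀ z ≤ M := hMmax z ⟨hzB.1, hzB.2⟩
    nlinarith
  -- second exposing functional
  set I₂ : Finset (Fin m) := Finset.univ.filter (fun i => L i b₂ = 0) with hI₂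
  set Sig2 : V3 →ₗ[ℝ] ℝ := ∑ i ∈ I₂, L i with hSig2
  have hSig2app : ∀ x : V3, Sig2 x = ∑ i ∈ I₂, L i x := by
    intro x; rw [hSig2]; simp [LinearMap.sum_apply]
  set ψ₂ : V3 →ₗ[ℝ] ℝ := cht + Sig2 with hψ₂
  have hψ₂app : ∀ x : V3, ψ₂ x = cht x + Sig2 x := by
    intro x; rw [hψ₂]; simp
  have hψ₂C : ∀ v : V3, (∀ i, L i v ≤ 0) → ψ₂ v ≤ 0 := by
    intro v hvC
    rw [hψ₂app, hSig2app]
    have h1 := hchtC v hvC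
    have h2 : ∑ i ∈ I₂, L i v ≤ 0 := Finset.sum_nonpos (fun i _ => hvC i)
    linarith
  have hψ₂b : ψ₂ b₂ = 0 := by
    rw [hψ₂app, hSig2app, hchtb₂]
    rw [Finset.sum_eq_zero (fun i hi => (Finset.mem_filter.mp hi).2)]
    ring
  have hker₂ : ∀ v : V3, (∀ i, L i v ≤ 0) → ψ₂ v = 0 → ∃ s : ℝ, v = s • b₂ := by
    intro v hvC hvψ
    by_cases hv0 : v = 0
    · exact ⟨0, by rw [hv0, zero_smul]⟩
    · rw [hψ₂app, hSig2app] at hvψ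
      have h1 := hchtC v hvC
      have h2 : ∑ i ∈ I₂, L i v ≤ 0 := Finset.sum_nonpos (fun i _ => hvC i)
      have hcht0 : cht v = 0 := by linarith
      have hsum0 : ∑ i ∈ I₂, L i v = 0 := by linarith
      have heach : ∀ i ∈ I₂, L i v = 0 := by
        have hsum : ∑ i ∈ I₂, (-(L i v)) = 0 := by
          rw [Finset.sum_neg_distrib, hsum0, neg_zero]
        have := (Finset.sum_eq_zero_iff_of_nonneg
          (fun i _ => by linarith [hvC i] : ∀ i ∈ I₂, (0:ℝ) ≤ -(L i v))).mp hsum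
        intro i hi
        linarith [this i hi]
      obtain ⟨hvhφ, hvhC, hvrep⟩ := hnorm v hv0 hvC
      have hφv : φ v < 0 := hφ v hv0 hvC
      have hpos : 0 < -(φ v) := by linarith
      have hχ₀vh : χ₀ ((-(φ v))⁻¹ • v) = M := by
        rw [hcht] at hcht0
        simp only [LinearMap.add_apply, LinearMap.smul_apply, smul_eq_mul] at hcht0
        rw [map_smul, smul_eq_mul]
        have : χ₀ v = M * (-(φ v)) := by nlinarith
        rw [this]
        field_simp [ne_of_lt hφv]
      have hdiff : (-(φ v))⁻¹ • v - b₂ = 0 := by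
        apply hN2
        · rw [map_sub, hvhφ, hb₂φ]; ring
        · rw [map_sub, hχ₀vh, hb₂χ]; ring
        · intro i hib
          have hiI : i ∈ I₂ := Finset.mem_filter.mpr ⟨Finset.mem_univ i, hib⟩
          rw [map_sub, hib, map_smul, smul_eq_mul, heach i hiI]
          ring
      refine ⟨-(φ v), ?_⟩
      rw [sub_eq_zero] at hdiff
      rw [← hdiff]
      exact hvrep
  have hψ₂0 : ψ₂ ≠ 0 := by
    intro hc
    have : ψ₂ b₁ = 0 := by rw [hc]; rfl
    rw [hψ₂app, hSig2app] at this
    have h2 : ∑ i ∈ I₂, L i b₁ ≤ 0 := Finset.sum_nonpos (fun i _ => hb₁C i)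
    linarith
  -- the second edge
  obtain ⟨A₂, hA₂⟩ := edge_construct m L c hKne hdim φ hφ b₂ hb₂0 hb₂C ψ₂ hψ₂0 hψ₂b hψ₂C hker₂
  -- contradiction with hpar
  apply hpar A₁ A₂ b₁ b₂ hA₁ hA₂
  rw [LinearIndependent.pair_iff]
  intro s t hst
  have h1 : s * φ b₁ + t * φ b₂ = 0 := by
    have := congrArg φ hst
    rw [map_add, map_smul, map_smul, map_zero, smul_eq_mul, smul_eq_mul] at this
    exact this
  have h2 : s * cht b₁ + t * cht b₂ = 0 := by
    have := congrArg cht hst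
    rw [map_add, map_smul, map_smul, map_zero, smul_eq_mul, smul_eq_mul] at this
    exact this
  rw [hb₁φ, hb₂φ] at h1
  rw [hchtb₂] at h2
  have hs0 : s = 0 := by
    rcases mul_eq_zero.mp (by linarith : s * cht b₁ = 0) with h | h
    · exact h
    · exact absurd h (ne_of_lt hchtb₁)
  constructor
  · exact hs0
  · rw [hs0] at h1
    linarith

set_option maxHeartbeats 2000000 in
/-- If all unbounded edges of a non-degenerate 3-dimensional unbounded convex
polyhedron `K ⊆ ℝ³` are parallel, then `K` has at least one bounded facet. -/
theorem exists_bounded_facet_of_parallel_unbounded_edges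
    (K : Set (Fin 3 → ℝ)) (hpoly : IsConvexPolyhedron 3 K)
    (hdim : polyDim 3 K = 3) (hunb : ¬ IsBounded K)
    (hnd : ∃ p, IsVertexOf 3 K p)
    (hpar : ∀ (A₁ A₂ : Set (Fin 3 → ℝ)) (v₁ v₂ : Fin 3 → ℝ),
      IsUnboundedEdgeWithDir 3 K A₁ v₁ → IsUnboundedEdgeWithDir 3 K A₂ v₂ →
      ¬ LinearIndependent ℝ ![v₁, v₂]) :
    ∃ F, IsFacetOf 3 K F ∧ IsBounded F := by
  classical
  obtain ⟨m, L, c, hL, hK⟩ := hpoly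
  subst hK
  -- vertex and its functional
  obtain ⟨p, φ, cφ, hφ0, hφne, hφle, hφeq⟩ := hnd
  have hpK : p ∈ {x : V3 | ∀ i, L i x ≤ c i} ∧ φ p = cφ := by
    have : p ∈ ({p} : Set V3) := rfl
    rw [hφeq] at this
    exact this
  have hφ : ∀ u : V3, u ≠ 0 → (∀ i, L i u ≤ 0) → φ u < 0 := by
    intro u hu0 huC
    have h1 : p + u ∈ {x : V3 | ∀ i, L i x ≤ c i} := by
      intro i
      rw [map_add]
      have := hpK.1 i
      have := huC i
      linarith
    have h2 : p + u ∉ ({p} : Set V3) := by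
      simp only [Set.mem_singleton_iff]
      intro hc
      apply hu0
      have : p + u - p = p - p := by rw [hc]
      simpa using this
    have h3 : φ (p + u) ≠ cφ := by
      intro hc
      exact h2 (by rw [hφeq]; exact ⟨h1, hc⟩)
    have h4 : φ (p + u) ≤ cφ := hφle _ h1
    rw [map_add, hpK.2] at h3 h4
    rcases lt_or_eq_of_le h4 with h | h
    · linarith
    · exact absurd (by linarith : φ u = 0) (fun hc => h3 (by rw [hc]; ring))
  have hKne : ({x : V3 | ∀ i, L i x ≤ c i}).Nonempty := ⟨p, hpK.1⟩
  -- recession direction from unboundedness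
  obtain ⟨v, hv0, hvC⟩ := unbounded_rec L c hunb
  -- all recession directions are pairwise dependent
  have hdep := rec_dep m L c hKne hdim φ hφ hpar
  -- some constraint strictly decreases along v
  have hN : ∃ i, L i v < 0 := by
    by_contra hcon
    push_neg at hcon
    have hall : ∀ i, L i v = 0 := fun i => le_antisymm (hvC i) (hcon i)
    have h1 : φ v < 0 := hφ v hv0 hvC
    have h2 : φ (-v) < 0 := hφ (-v) (neg_ne_zero.mpr hv0) (fun i => by rw [map_neg, hall]; simp)
    rw [map_neg] at h2
    linarith
  -- a strictly interior point
  have hstrict_i : ∀ i, ∃ x : V3, (∀ k, L k x ≤ c k) ∧ L i x < c i := by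
    intro i
    by_contra hcon
    push_neg at hcon
    have hallK : ∀ x : V3, (∀ k, L k x ≤ c k) → L i x = c i := by
      intro x hx
      exact le_antisymm (hx i) (hcon x hx)
    have hle : vectorSpan ℝ {x : V3 | ∀ k, L k x ≤ c k} ≤ LinearMap.ker (L i) := by
      rw [vectorSpan_def, Submodule.span_le]
      rintro w ⟨x, hx, y, hy, rfl⟩
      have h1 := hallK x hx
      have h2 := hallK y hy
      simp only [SetLike.mem_coe, LinearMap.mem_ker, vsub_eq_sub, map_sub]
      rw [h1, h2, sub_self]
    have hmono := Submodule.finrank_mono hle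
    rw [finrank_ker_two (L i) (hL i)] at hmono
    have h3 : Module.finrank ℝ (vectorSpan ℝ {x : V3 | ∀ k, L k x ≤ c k}) = 3 := by
      unfold polyDim at hdim
      rw [direction_affineSpan] at hdim
      exact hdim
    omega
  choose xw hxwS hxwlt using hstrict_i
  have hmpos : 0 < m := by
    obtain ⟨i, _⟩ := hN
    exact Fin.pos i
  have hconvS : Convex ℝ {x : V3 | ∀ k, L k x ≤ c k} := by
    intro x hx y hy a b' ha hb' hab
    intro i
    have : L i (a • x + b' • y) = a * L i x + b' * L i y := by simp
    rw [this]
    calc a * L i x + b' * L i y ≤ a * c i + b' * c i := by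
          apply add_le_add
          · exact mul_le_mul_of_nonneg_left (hx i) ha
          · exact mul_le_mul_of_nonneg_left (hy i) hb'
    _ = c i := by rw [← add_mul, hab, one_mul]
  have hx₀ : ∃ x₀ : V3, ∀ i, L i x₀ < c i := by
    set n : ℝ := (m : ℝ) with hn
    have hnpos : 0 < n := by rw [hn]; exact_mod_cast hmpos
    refine ⟨∑ k ∈ Finset.univ, (n⁻¹ : ℝ) • xw k, ?_⟩
    intro i
    have hmap : L i (∑ k ∈ Finset.univ, (n⁻¹ : ℝ) • xw k) = ∑ k ∈ Finset.univ, n⁻¹ * L i (xw k) := by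
      rw [map_sum]; congr 1; ext k; simp
    rw [hmap]
    have hlt : ∑ k ∈ Finset.univ, n⁻¹ * L i (xw k) < ∑ _k ∈ (Finset.univ : Finset (Fin m)), n⁻¹ * c i := by
      apply Finset.sum_lt_sum
      · intro k _
        have : L i (xw k) ≤ c i := hxwS k i
        nlinarith [inv_pos.mpr hnpos]
      · exact ⟨i, Finset.mem_univ i, by nlinarith [hxwlt i, inv_pos.mpr hnpos]⟩
    calc ∑ k ∈ Finset.univ, n⁻¹ * L i (xw k) < ∑ _k ∈ (Finset.univ : Finset (Fin m)), n⁻¹ * c i := hlt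
    _ = n * (n⁻¹ * c i) := by rw [Finset.sum_const, nsmul_eq_mul, hn]; simp
    _ = c i := by field_simp
  obtain ⟨x₀, hx₀strict⟩ := hx₀
  -- a ball of strict feasibility
  have hopen : IsOpen {x : V3 | ∀ i, L i x < c i} := by
    have : {x : V3 | ∀ i, L i x < c i} = ⋂ i, {x : V3 | L i x < c i} := by ext x; simp
    rw [this]
    exact isOpen_iInter_of_finite (fun i =>
      isOpen_lt (L i).continuous_of_finiteDimensional continuous_const)
  obtain ⟨R, hRpos, hRsub⟩ := Metric.isOpen_iff.mp hopen x₀ hx₀strict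
  -- the covering by "first-hit" index sets
  set N : Finset (Fin m) := Finset.univ.filter (fun i => L i v < 0) with hNdef
  have hNne : N.Nonempty := by
    obtain ⟨i, hi⟩ := hN
    exact ⟨i, Finset.mem_filter.mpr ⟨Finset.mem_univ i, hi⟩⟩
  set τ : Fin m → V3 → ℝ := fun i x => (c i - L i x) * (-(L i v))⁻¹ with hτdef
  have hτcont : ∀ i, Continuous (τ i) := by
    intro i
    apply Continuous.mul
    · exact continuous_const.sub (L i).continuous_of_finiteDimensional
    · exact continuous_const
  set SS : Fin m → Set V3 := fun j =>
    Metric.closedBall x₀ (R/2) ∩ ⋂ k ∈ N, {x : V3 | τ j x ≤ τ k x} with hSSdef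
  have hSSclosed : ∀ j ∈ N, IsClosed (SS j) := by
    intro j _
    apply IsClosed.inter Metric.isClosed_closedBall
    apply isClosed_biInter
    intro k _
    exact isClosed_le (hτcont j) (hτcont k)
  have hSScover : Metric.ball x₀ (R/2) ⊆ ⋃ j ∈ N, SS j := by
    intro x hx
    obtain ⟨j, hjN, hjmin⟩ := Finset.exists_min_image N (fun i => τ i x) hNne
    simp only [Set.mem_iUnion]
    refine ⟨j, hjN, ?_, ?_⟩
    · exact Metric.ball_subset_closedBall hx
    · simp only [Set.mem_iInter]
      intro k hk
      exact hjmin k hk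
  obtain ⟨j, hjN, y, ρ, hρpos, hballsub⟩ :=
    cover_ball N SS hSSclosed x₀ (R/2) (by linarith) hSScover
  have hLjv : L j v < 0 := (Finset.mem_filter.mp hjN).2
  -- points of the ball project into the facet
  have hproj : ∀ x ∈ Metric.ball y ρ, (x - τ j x • v) ∈ {x : V3 | ∀ i, L i x ≤ c i} ∧
      L j (x - τ j x • v) = c j := by
    intro x hx
    have hxSS : x ∈ SS j := hballsub hx
    have hxball : x ∈ Metric.closedBall x₀ (R/2) := hxSS.1
    have hxstrict : ∀ i, L i x < c i := by
      apply hRsub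
      rw [Metric.mem_ball]
      calc dist x x₀ ≤ R/2 := Metric.mem_closedBall.mp hxball
      _ < R := by linarith
    have hxmin : ∀ k ∈ N, τ j x ≤ τ k x := by
      have := hxSS.2
      simp only [Set.mem_iInter] at this
      exact this
    have hτj0 : 0 ≤ τ j x := by
      rw [hτdef]
      have h1 : 0 < c j - L j x := by linarith [hxstrict j]
      have h2 : 0 < (-(L j v))⁻¹ := by
        apply inv_pos.mpr
        linarith
      positivity
    have hcompute : ∀ i, L i (x - τ j x • v) = L i x - τ j x * L i v := by
      intro i
      rw [map_sub, map_smul, smul_eq_mul]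
    constructor
    · intro i
      rw [hcompute i]
      by_cases hiN : i ∈ N
      · have hLiv : L i v < 0 := (Finset.mem_filter.mp hiN).2
        have h1 : τ j x ≤ τ i x := hxmin i hiN
        have h2 : τ i x * (-(L i v)) = c i - L i x := by
          simp only [hτdef]
          field_simp [ne_of_lt hLiv]
        nlinarith
      · have hLiv : L i v = 0 := by
          rw [hNdef] at hiN
          simp only [Finset.mem_filter, Finset.mem_univ, true_and, not_lt] at hiN
          exact le_antisymm (hvC i) hiN
        rw [hLiv]
        simp only [mul_zero, sub_zero]
        exact (hxstrict i).le
    · rw [hcompute j]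
      have h2 : τ j x * (-(L j v)) = c j - L j x := by
        simp only [hτdef]
        field_simp [ne_of_lt hLjv]
      linarith
  -- the facet
  set F : Set V3 := {x : V3 | ∀ i, L i x ≤ c i} ∩ {x : V3 | L j x = c j} with hFdef
  have hyF : (y - τ j y • v) ∈ F := by
    have := hproj y (Metric.mem_ball_self hρpos)
    exact ⟨this.1, this.2⟩
  have hface : IsFaceOf 3 {x : V3 | ∀ i, L i x ≤ c i} F :=
    ⟨L j, c j, hL j, ⟨y - τ j y • v, hyF⟩, fun x hx => hx j, rfl⟩
  -- dimension of the facet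
  have hdimF : polyDim 3 F = 2 := by
    have hle : vectorSpan ℝ F ≤ LinearMap.ker (L j) := by
      rw [vectorSpan_def, Submodule.span_le]
      rintro w ⟨x1, hx1, x2, hx2, rfl⟩
      simp only [SetLike.mem_coe, LinearMap.mem_ker, vsub_eq_sub, map_sub]
      rw [hx1.2, hx2.2, sub_self]
    have hge : LinearMap.ker (L j) ≤ vectorSpan ℝ F := by
      intro u hu
      rw [LinearMap.mem_ker] at hu
      by_cases hu0 : u = 0
      · rw [hu0]; exact Submodule.zero_mem _
      · have hun : 0 < ‖u‖ := norm_pos_iff.mpr hu0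
        set ε : ℝ := ρ / (2 * ‖u‖) with hε
        have hεpos : 0 < ε := by positivity
        set x2 : V3 := y + ε • u with hx2def
        have hx2ball : x2 ∈ Metric.ball y ρ := by
          rw [Metric.mem_ball, hx2def]
          have : dist (y + ε • u) y = ‖ε • u‖ := by
            rw [dist_eq_norm]
            congr 1
            abel
          rw [this, norm_smul, Real.norm_eq_abs, abs_of_nonneg hεpos.le, hε]
          rw [div_mul_eq_mul_div, mul_comm]
          rw [div_lt_iff₀ (by positivity)]
          nlinarith
        have hp1 := hproj y (Metric.mem_ball_self hρpos)
        have hp2 := hproj x2 hx2ball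
        have hP1F : (y - τ j y • v) ∈ F := ⟨hp1.1, hp1.2⟩
        have hP2F : (x2 - τ j x2 • v) ∈ F := ⟨hp2.1, hp2.2⟩
        have hττ : τ j x2 = τ j y := by
          simp only [hτdef, hx2def, map_add, map_smul, smul_eq_mul, hu]
          ring
        have hdiffeq : (x2 - τ j x2 • v) - (y - τ j y • v) = ε • u := by
          rw [hττ, hx2def]
          abel
        have hmem := vsub_mem_vectorSpan ℝ hP2F hP1F
        rw [vsub_eq_sub, hdiffeq] at hmem
        have := Submodule.smul_mem (vectorSpan ℝ F) ε⁻¹ hmem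
        rw [smul_smul, inv_mul_cancel₀ hεpos.ne', one_smul] at this
        exact this
    have heq : vectorSpan ℝ F = LinearMap.ker (L j) := le_antisymm hle hge
    unfold polyDim
    rw [direction_affineSpan, heq]
    exact finrank_ker_two (L j) (hL j)
  -- boundedness of the facet
  have hbounded : IsBounded F := by
    by_contra hcon
    set A' : (Fin m ⊕ Unit) → (V3 →ₗ[ℝ] ℝ) := Sum.elim L (fun _ => -(L j)) with hA'
    set b' : (Fin m ⊕ Unit) → ℝ := Sum.elim c (fun _ => -(c j)) with hb'
    have hFeq : F = {x : V3 | ∀ i, A' i x ≤ b' i} := by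
      rw [hFdef]
      ext x
      simp only [Set.mem_inter_iff, Set.mem_setOf_eq, hA', hb']
      constructor
      · rintro ⟨h1, h2⟩ i
        rcases i with i | _
        · exact h1 i
        · simp [h2]
      · intro h
        constructor
        · intro i
          exact h (Sum.inl i)
        · have h1 := h (Sum.inl j)
          have h2 := h (Sum.inr ())
          simp at h1 h2
          linarith
    rw [hFeq] at hcon
    obtain ⟨u, hu0, huC⟩ := unbounded_rec A' b' hcon
    have huL : ∀ i, L i u ≤ 0 := fun i => huC (Sum.inl i)
    have huj : L j u = 0 := by
      have h1 := huC (Sum.inl j)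
      have h2 := huC (Sum.inr ())
      simp [hA'] at h1 h2
      linarith
    apply hdep u v huL hvC
    rw [LinearIndependent.pair_iff]
    intro s t hst
    have h1 : s * L j u + t * L j v = 0 := by
      have := congrArg (L j) hst
      rw [map_add, map_smul, map_smul, map_zero, smul_eq_mul, smul_eq_mul] at this
      exact this
    rw [huj] at h1
    have ht0 : t = 0 := by
      rcases mul_eq_zero.mp (by linarith : t * L j v = 0) with h | h
      · exact h
      · exact absurd h (ne_of_lt hLjv)
    constructor
    · rw [ht0] at hst
      simp only [zero_smul, add_zero] at hst
      rcases smul_eq_zero.mp hst with h | h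
      · exact h
      · exact absurd h hu0
    · exact ht0
  exact ⟨F, ⟨hface, by rw [hdimF, hdim]⟩, hbounded⟩
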